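/- Fix positive integers s and t, and suppose that π_{st}(G × H, (x, y)) ≤ π_s(G, x) · π_t(H, y) holds for all finite simple graphs G and H and all vertices x ∈ V(G), y ∈ V(H). Then π_{2st}(G × H, (x, y)) ≤ π_{2s}(G, x) · π_t(H, y) and π_{2st}(G × H, (x, y)) ≤ π_s(G, x) · π_{2t}(H, y) hold for all finite simple graphs G and H and all vertices x ∈ V(G), y ∈ V(H). -/

import Mathlib

open scoped BigOperators

/-- A single pebbling move on a simple graph: remove two pebbles from `u`
and add one pebble on an adjacent vertex `v`. -/
def PebMove {V : Type*} [DecidableEq V] (G : SimpleGraph V) (D D' : V → ℕ) : Prop :=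
  ∃ u v, G.Adj u v ∧ 2 ≤ D u ∧
    D' = fun w => if w = u then D u - 2 else if w = v then D v + 1 else D w

/-- `D'` is reachable from `D`: some sequence of pebbling moves starting at `D`
produces a distribution containing `D'`. -/
def Reaches {V : Type*} [DecidableEq V] (G : SimpleGraph V) (D D' : V → ℕ) : Prop :=
  ∃ D'', Relation.ReflTransGen (PebMove G) D D'' ∧ ∀ v, D' v ≤ D'' v

/-- Total number of pebbles of a distribution. -/
def pebTotal {V : Type*} [Fintype V] (D : V → ℕ) : ℕ := ∑ v, D v

/-- The pebbling number of a set `S` of target distributions on `G`: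
the least `N` (possibly `∞`) such that every member of `S` is reachable from
every distribution with at least `N` pebbles in total. -/
noncomputable def pebSet {V : Type*} [Fintype V] [DecidableEq V] (G : SimpleGraph V)
    (S : Set (V → ℕ)) : ℕ∞ :=
  sInf {N : ℕ∞ | ∀ D₀ : V → ℕ, N ≤ (pebTotal D₀ : ℕ∞) → ∀ D ∈ S, Reaches G D₀ D}

/-- The pebbling number of a single target distribution. -/
noncomputable def peb {V : Type*} [Fintype V] [DecidableEq V] (G : SimpleGraph V)
    (D : V → ℕ) : ℕ∞ :=
  pebSet G {D}

/-- The distribution with `t` pebbles on `v` and none elsewhere. -/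
def unitDist {V : Type*} [DecidableEq V] (t : ℕ) (v : V) : V → ℕ :=
  fun w => if w = v then t else 0


section Core
variable {V : Type*} [DecidableEq V] {G : SimpleGraph V}

lemma reaches_of_le {D D' : V → ℕ} (h : ∀ v, D' v ≤ D v) : Reaches G D D' :=
  ⟨D, Relation.ReflTransGen.refl, h⟩

lemma rtg_mono : ∀ {D D'' : V → ℕ}, Relation.ReflTransGen (PebMove G) D D'' →
    ∀ E : V → ℕ, (∀ v, D v ≤ E v) →
    ∃ E', Relation.ReflTransGen (PebMove G) E E' ∧ ∀ v, D'' v ≤ E' v := by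
  intro D D'' h
  induction h with
  | refl => exact fun E hE => ⟨E, Relation.ReflTransGen.refl, hE⟩
  | tail _ hmove ih =>
    intro E hE
    obtain ⟨E₁, hr₁, hle₁⟩ := ih E hE
    obtain ⟨p, q, hadj, hp, rfl⟩ := hmove
    refine ⟨fun w => if w = p then E₁ p - 2 else if w = q then E₁ q + 1 else E₁ w,
      hr₁.tail ⟨p, q, hadj, le_trans hp (hle₁ p), rfl⟩, ?_⟩
    intro v
    have hne : p ≠ q := hadj.ne
    by_cases h1 : v = p <;> by_cases h2 : v = q <;>
      simp [h1, h2, hne, Ne.symm hne] <;> first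
      | (have := hle₁ p; omega)
      | (have := hle₁ q; omega)
      | exact hle₁ v

lemma reaches_trans {D A B : V → ℕ} (h1 : Reaches G D A) (h2 : Reaches G A B) :
    Reaches G D B := by
  obtain ⟨D₁, r1, hA⟩ := h1
  obtain ⟨A₁, r2, hB⟩ := h2
  obtain ⟨E', r3, hle⟩ := rtg_mono r2 D₁ hA
  exact ⟨E', r1.trans r3, fun v => le_trans (hB v) (hle v)⟩

lemma reaches_mono_target {D T T' : V → ℕ} (h : ∀ v, T v ≤ T' v) (hr : Reaches G D T') :
    Reaches G D T := by
  obtain ⟨E, r, hle⟩ := hr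
  exact ⟨E, r, fun v => le_trans (h v) (hle v)⟩

lemma transfer {V₂ : Type*} [DecidableEq V₂] {G₂ : SimpleGraph V₂}
    (φ : (V → ℕ) → (V₂ → ℕ))
    (hsim : ∀ D D' : V → ℕ, PebMove G D D' → Reaches G₂ (φ D) (φ D'))
    {D D'' : V → ℕ} (h : Relation.ReflTransGen (PebMove G) D D'') :
    Reaches G₂ (φ D) (φ D'') := by
  induction h with
  | refl => exact reaches_of_le (fun _ => le_refl _)
  | tail h1 hmove ih => exact reaches_trans ih (hsim _ _ hmove)

end Core

section Deficit
variable {V : Type*} [DecidableEq V] {G : SimpleGraph V}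

lemma deficit_step {A B : V → ℕ} (h : PebMove G A B) (E : V → ℕ) (u : V)
    (hle : ∀ w, A w ≤ E w + (if w = u then 1 else 0)) :
    ∃ E' u', Relation.ReflTransGen (PebMove G) E E' ∧
      ∀ w, B w ≤ E' w + (if w = u' then 1 else 0) := by
  obtain ⟨p, q, hadj, hp, rfl⟩ := h
  have hne : p ≠ q := hadj.ne
  by_cases hE : 2 ≤ E p
  · refine ⟨fun w => if w = p then E p - 2 else if w = q then E q + 1 else E w, u,
      Relation.ReflTransGen.single ⟨p, q, hadj, hE, rfl⟩, ?_⟩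
    intro w
    rcases eq_or_ne w p with rfl | h1
    · have h := hle w
      simp only [if_pos rfl] at *
      split_ifs at h ⊢ <;> omega
    · rcases eq_or_ne w q with rfl | h2
      · have h := hle w
        simp only [if_neg h1, if_pos rfl] at *
        split_ifs at h ⊢ <;> omega
      · simp only [if_neg h1, if_neg h2]
        exact hle w
  · push_neg at hE
    have hup : p = u := by
      by_contra hc
      have := hle p
      rw [if_neg hc] at this
      omega
    subst hup
    refine ⟨E, q, Relation.ReflTransGen.refl, ?_⟩
    intro w
    rcases eq_or_ne w p with rfl | h1
    · have h := hle w
      rw [if_pos rfl] at h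
      simp only [hne, if_pos rfl, if_neg, ite_false, ite_true, if_true]
      simp [hne]
      omega
    · have h := hle w
      rw [if_neg h1] at h
      rcases eq_or_ne w q with rfl | h2
      · simp [h1]
        omega
      · simp [h1, h2]
        omega

lemma deficit : ∀ {D D'' : V → ℕ}, Relation.ReflTransGen (PebMove G) D D'' →
    ∀ (E : V → ℕ) (u : V), (∀ w, D w ≤ E w + (if w = u then 1 else 0)) →
    ∃ E' u', Relation.ReflTransGen (PebMove G) E E' ∧
      ∀ w, D'' w ≤ E' w + (if w = u' then 1 else 0) := by
  intro D D'' h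
  induction h with
  | refl => exact fun E u hle => ⟨E, u, Relation.ReflTransGen.refl, hle⟩
  | tail _ hmove ih =>
    intro E u hle
    obtain ⟨E₁, u₁, hr₁, hle₁⟩ := ih E u hle
    obtain ⟨E₂, u₂, hr₂, hle₂⟩ := deficit_step hmove E₁ u₁ hle₁
    exact ⟨E₂, u₂, hr₁.trans hr₂, hle₂⟩

lemma drop {x : V} {tt : ℕ} {N : ℕ∞} [Fintype V]
    (hN : ∀ D₀ : V → ℕ, N ≤ (pebTotal D₀ : ℕ∞) → Reaches G D₀ (unitDist tt x)) :
    ∀ (a : ℕ) (D₀ : V → ℕ), N ≤ ((pebTotal D₀ + a : ℕ) : ℕ∞) →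
      ∃ D'', Relation.ReflTransGen (PebMove G) D₀ D'' ∧ tt - a ≤ D'' x := by
  intro a
  induction a with
  | zero =>
    intro D₀ hle
    obtain ⟨D'', hr, hc⟩ := hN D₀ (by simpa using hle)
    have := hc x
    simp [unitDist] at this
    exact ⟨D'', hr, by omega⟩
  | succ a ih =>
    intro D₀ hle
    set D₁ : V → ℕ := fun w => D₀ w + (if w = x then 1 else 0) with hD₁
    have htot : pebTotal D₁ = pebTotal D₀ + 1 := by
      simp [pebTotal, hD₁, Finset.sum_add_distrib]
    obtain ⟨D'', hr, hc⟩ := ih D₁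
      (by rw [htot, show pebTotal D₀ + 1 + a = pebTotal D₀ + (a + 1) from by omega]; exact hle)
    obtain ⟨E', u', hr', hle'⟩ := deficit hr D₀ x (fun w => le_of_eq rfl)
    have h1 := hle' x
    refine ⟨E', hr', ?_⟩
    by_cases hu : x = u'
    · rw [if_pos hu] at h1; omega
    · rw [if_neg hu] at h1; omega

end Deficit

section Pendant
variable {V : Type*} [DecidableEq V]

def pendant (G : SimpleGraph V) (x : V) : SimpleGraph (Option V) where
  Adj a b := match a, b with
    | some a, some b => G.Adj a b
    | some a, none => a = x
    | none, some b => b = x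
    | none, none => False
  symm := by
    constructor
    intro a b
    cases a <;> cases b <;> simp <;> exact fun h => G.adj_symm h
  loopless := by
    constructor
    intro a
    cases a <;> simp

@[simp] lemma pendant_adj_some_some {G : SimpleGraph V} {x a b : V} :
    (pendant G x).Adj (some a) (some b) ↔ G.Adj a b := Iff.rfl

@[simp] lemma pendant_adj_some_none {G : SimpleGraph V} {x a : V} :
    (pendant G x).Adj (some a) none ↔ a = x := Iff.rfl

@[simp] lemma pendant_adj_none_some {G : SimpleGraph V} {x b : V} :
    (pendant G x).Adj none (some b) ↔ b = x := Iff.rfl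

@[simp] lemma pendant_adj_none_none {G : SimpleGraph V} {x : V} :
    ¬ (pendant G x).Adj none none := fun h => h

-- repeated moves from u to v
lemma pump {G : SimpleGraph V} {u v : V} (hadj : G.Adj u v) :
    ∀ (k : ℕ) (D : V → ℕ), 2 * k ≤ D u →
      ∃ D', Relation.ReflTransGen (PebMove G) D D' ∧ D v + k ≤ D' v := by
  have hne : u ≠ v := hadj.ne
  intro k
  induction k with
  | zero => exact fun D _ => ⟨D, Relation.ReflTransGen.refl, by omega⟩
  | succ k ih =>
    intro D hD
    set D₁ : V → ℕ := fun w => if w = u then D u - 2 else if w = v then D v + 1 else D w with hD₁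
    have h1 : D₁ u = D u - 2 := by simp [hD₁, hne]
    obtain ⟨D', hr, hle⟩ := ih D₁ (by omega)
    have h2 : D₁ v = D v + 1 := by simp [hD₁, Ne.symm hne]
    exact ⟨D', Relation.ReflTransGen.head ⟨u, v, hadj, by omega, rfl⟩ hr, by omega⟩

lemma lemB [Fintype V] (G : SimpleGraph V) (x : V) (s : ℕ) :
    peb (pendant G x) (unitDist s none) ≤ peb G (unitDist (2 * s) x) := by
  apply sInf_le_sInf
  intro N hN
  simp only [Set.mem_setOf_eq, Set.mem_singleton_iff] at hN ⊢
  have hN' : ∀ D₀ : V → ℕ, N ≤ (pebTotal D₀ : ℕ∞) → Reaches G D₀ (unitDist (2 * s) x) :=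
    fun D₀ h0 => hN D₀ h0 _ rfl
  rintro E hE D rfl
  set a : ℕ := E none with ha
  by_cases has : s ≤ a
  · refine reaches_of_le ?_
    intro v
    cases v <;> simp [unitDist] <;> omega
  · push_neg at has
    set Dh : V → ℕ := fun g => E (some g) with hDh
    have htot : pebTotal E = pebTotal Dh + a := by
      simp [pebTotal, Fintype.sum_option, hDh, ha]
      ring
    obtain ⟨D'', hr, hx⟩ := drop hN' a Dh (by rw [← htot]; exact hE)
    -- lift the move sequence to the pendant graph
    set ι : (V → ℕ) → (Option V → ℕ) := fun D o => Option.rec a D o with hι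
    have hsim : ∀ A B : V → ℕ, PebMove G A B → Reaches (pendant G x) (ι A) (ι B) := by
      rintro A B ⟨p, q, hadj, hp, rfl⟩
      refine ⟨fun w => if w = some p then ι A (some p) - 2
        else if w = some q then ι A (some q) + 1 else ι A w,
        Relation.ReflTransGen.single ⟨some p, some q, by simpa using hadj, by simpa using hp, rfl⟩,
        ?_⟩
      intro o
      cases o with
      | none => simp [hι]
      | some g =>
        by_cases h1 : g = p <;> by_cases h2 : g = q <;>
          simp [hι, h1, h2] <;> omega
    have hEι : E = ι Dh := by
      funext o; cases o <;> simp [hι, hDh, ha]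
    have hreach1 : Reaches (pendant G x) E (ι D'') := by
      rw [hEι]; exact transfer ι hsim hr
    have hreach2 : Reaches (pendant G x) (ι D'') (unitDist s none) := by
      obtain ⟨D', hr', hv⟩ := pump (G := pendant G x) (u := some x) (v := none)
        (by simp) (s - a) (ι D'') (by simp [hι]; omega)
      refine ⟨D', hr', ?_⟩
      intro o
      cases o with
      | none =>
        have : ι D'' none = a := by simp [hι]
        simp [unitDist]; omega
      | some g => simp [unitDist]
    exact reaches_trans hreach1 hreach2
end Pendant

section LemA
variable {V W : Type*} [DecidableEq V] [DecidableEq W]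

open SimpleGraph

lemma peb_le_of [Fintype V] [Fintype W] (G : SimpleGraph V) (G₂ : SimpleGraph W)
    (T : V → ℕ) (T₂ : W → ℕ) (lift : (W → ℕ) → (V → ℕ))
    (hTot : ∀ E, pebTotal E ≤ pebTotal (lift E))
    (htrans : ∀ E, Reaches G (lift E) T → Reaches G₂ E T₂) :
    peb G₂ T₂ ≤ peb G T := by
  apply sInf_le_sInf
  intro N hN
  simp only [Set.mem_setOf_eq, Set.mem_singleton_iff] at hN ⊢
  rintro E hE D rfl
  exact htrans E (hN (lift E) (le_trans hE (by exact_mod_cast hTot E)) _ rfl)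

variable {G : SimpleGraph V} {H : SimpleGraph W} {x : V}

/-- value of a pendant-product distribution pushed down to the base product -/
def pushA (x : V) (D : Option V × W → ℕ) : V × W → ℕ :=
  fun p => D (some p.1, p.2) + if p.1 = x then 2 * D (none, p.2) else 0

lemma hsimA : ∀ A B : Option V × W → ℕ, PebMove ((pendant G x) □ H) A B →
    Reaches (G □ H) (pushA x A) (pushA x B) := by
  rintro A B ⟨⟨og, h1⟩, ⟨og2, h2⟩, hadj, hp, rfl⟩
  rw [boxProd_adj] at hadj
  match og, og2 with
  | some g, some g2 =>
    have hadj' : (G □ H).Adj (g, h1) (g2, h2) := by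
      rw [boxProd_adj]
      rcases hadj with ⟨ha, hb⟩ | ⟨ha, hb⟩
      · exact Or.inl ⟨ha, hb⟩
      · exact Or.inr ⟨ha, by simpa using hb⟩
    have hne : (g, h1) ≠ (g2, h2) := hadj'.ne
    refine ⟨fun p => if p = (g, h1) then pushA x A (g, h1) - 2
        else if p = (g2, h2) then pushA x A (g2, h2) + 1 else pushA x A p,
      Relation.ReflTransGen.single
        ⟨(g, h1), (g2, h2), hadj', by simp [pushA]; omega, rfl⟩, ?_⟩
    rintro ⟨p1, p2⟩
    by_cases hq1 : (p1, p2) = (g, h1) <;> by_cases hq2 : (p1, p2) = (g2, h2) <;>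
      simp_all [pushA, Prod.ext_iff] <;>
      split_ifs <;> simp_all <;> omega
  | some g, none =>
    -- move from column some into the pendant column: g = x, h1 = h2
    have hgx : g = x ∧ h1 = h2 := by
      rcases hadj with ⟨ha, hb⟩ | ⟨ha, hb⟩
      · exact ⟨ha, hb⟩
      · simp at hb
    obtain ⟨rfl, rfl⟩ := hgx
    refine reaches_of_le ?_
    rintro ⟨p1, p2⟩
    by_cases hq1 : (p1, p2) = (g, h1) <;>
      simp_all [pushA, Prod.ext_iff] <;>
      first
      | omega
      | (split_ifs <;> (try simp_all) <;> omega)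
  | none, some g2 =>
    have hgx : g2 = x ∧ h1 = h2 := by
      rcases hadj with ⟨ha, hb⟩ | ⟨ha, hb⟩
      · exact ⟨ha, hb⟩
      · simp at hb
    obtain ⟨rfl, rfl⟩ := hgx
    refine reaches_of_le ?_
    rintro ⟨p1, p2⟩
    by_cases hq1 : (p1, p2) = (g2, h1) <;>
      simp_all [pushA, Prod.ext_iff] <;>
      first
      | omega
      | (split_ifs <;> (try simp_all) <;> omega)
  | none, none =>
    have hH : H.Adj h1 h2 := by
      rcases hadj with ⟨ha, _⟩ | ⟨ha, _⟩
      · simp at ha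
      · exact ha
    have hne : h1 ≠ h2 := hH.ne
    have hadj' : (G □ H).Adj (x, h1) (x, h2) := by
      rw [boxProd_adj]; exact Or.inr ⟨hH, rfl⟩
    have h4 : 4 ≤ pushA x A (x, h1) := by simp [pushA]; omega
    obtain ⟨M1, hM1⟩ : ∃ M1 : V × W → ℕ, M1 = fun p => if p = (x, h1) then pushA x A (x, h1) - 2
      else if p = (x, h2) then pushA x A (x, h2) + 1 else pushA x A p := ⟨_, rfl⟩
    have hM1h1 : M1 (x, h1) = pushA x A (x, h1) - 2 := by
      rw [hM1]; simp
    have step1 : PebMove (G □ H) (pushA x A) M1 := ⟨(x, h1), (x, h2), hadj', by omega, hM1⟩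
    obtain ⟨M2, hM2⟩ : ∃ M2 : V × W → ℕ, M2 = fun p => if p = (x, h1) then M1 (x, h1) - 2
      else if p = (x, h2) then M1 (x, h2) + 1 else M1 p := ⟨_, rfl⟩
    have step2 : PebMove (G □ H) M1 M2 := ⟨(x, h1), (x, h2), hadj', by omega, hM2⟩
    refine ⟨M2, Relation.ReflTransGen.head step1 (Relation.ReflTransGen.single step2), ?_⟩
    rintro ⟨p1, p2⟩
    subst hM2
    subst hM1
    by_cases hx1 : p1 = x
    · subst hx1
      by_cases hq1 : p2 = h1
      · subst hq1
        simp [pushA, hne]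
        omega
      · by_cases hq2 : p2 = h2
        · subst hq2
          simp [pushA, hne, Ne.symm hne, hq1]
          omega
        · simp [pushA, hq1, hq2]
    · simp [pushA, hx1]

lemma lemA [Fintype V] [Fintype W] (G : SimpleGraph V) (H : SimpleGraph W)
    (x : V) (y : W) (m : ℕ) :
    peb (G □ H) (unitDist (2 * m) (x, y)) ≤ peb ((pendant G x) □ H) (unitDist m (none, y)) := by
  refine peb_le_of _ _ _ _
    (fun E p => Option.rec 0 (fun g => E (g, p.2)) p.1) (fun E => le_of_eq ?_) (fun E hr => ?_)
  · rw [pebTotal, pebTotal, Fintype.sum_prod_type, Fintype.sum_prod_type, Fintype.sum_option]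
    simp
  · obtain ⟨D'', hr', hc⟩ := hr
    have := transfer (G := (pendant G x) □ H) (G₂ := G □ H) (pushA x) hsimA hr'
    have hEq : pushA x (fun p => Option.rec 0 (fun g => E (g, p.2)) p.1) = E := by
      funext p
      simp [pushA]
    rw [hEq] at this
    refine reaches_mono_target (fun p => ?_) this
    have hcy := hc (none, y)
    simp [unitDist] at hcy
    rcases p with ⟨p1, p2⟩
    by_cases h1 : (p1, p2) = (x, y)
    · rcases Prod.mk.injEq .. ▸ h1 with ⟨rfl, rfl⟩
      simp_all [unitDist, pushA]
      omega
    · simp [unitDist, h1]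

end LemA

section Iso
variable {V W : Type*} [DecidableEq V] [DecidableEq W]

lemma peb_iso_le [Fintype V] [Fintype W] {G : SimpleGraph V} {G₂ : SimpleGraph W}
    (f : V ≃ W) (hf : ∀ a b, G.Adj a b ↔ G₂.Adj (f a) (f b)) (T : V → ℕ) :
    peb G₂ (fun w => T (f.symm w)) ≤ peb G T := by
  refine peb_le_of _ _ _ _ (fun E v => E (f v)) (fun E => le_of_eq ?_) (fun E hr => ?_)
  · exact (Equiv.sum_comp f E).symm
  · obtain ⟨D'', hr', hc⟩ := hr
    have hsim : ∀ A B : V → ℕ, PebMove G A B →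
        Reaches G₂ (fun w => A (f.symm w)) (fun w => B (f.symm w)) := by
      rintro A B ⟨p, q, hadj, hp, rfl⟩
      have hne : p ≠ q := hadj.ne
      refine ⟨_, Relation.ReflTransGen.single
        ⟨f p, f q, (hf p q).mp hadj, by simpa using hp, rfl⟩, fun w => le_of_eq ?_⟩
      by_cases h1 : w = f p
      · subst h1
        simp
      · by_cases h2 : w = f q
        · subst h2
          have t1 : f.symm (f q) ≠ p := by simp [Ne.symm hne]
          simp [t1, h1, Ne.symm hne]
        · have t1 : f.symm w ≠ p := fun hcon => h1 (by rw [← hcon, Equiv.apply_symm_apply])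
          have t2 : f.symm w ≠ q := fun hcon => h2 (by rw [← hcon, Equiv.apply_symm_apply])
          simp [t1, t2, h1, h2]
    have h0 := transfer (G := G) (G₂ := G₂) (fun D w => D (f.symm w)) hsim hr'
    have h1 : Reaches G₂ (fun w => E (f (f.symm w))) (fun w => D'' (f.symm w)) := h0
    have hEq : (fun w => E (f (f.symm w))) = E := by
      funext w; simp
    rw [hEq] at h1
    exact reaches_mono_target (fun w => hc (f.symm w)) h1

lemma unitDist_iso {V W : Type*} [DecidableEq V] [DecidableEq W] (e : V ≃ W)
    (m : ℕ) (p : V) : (fun w => unitDist m p (e.symm w)) = unitDist m (e p) := by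
  funext w
  simp only [unitDist, Equiv.symm_apply_eq]

end Iso

open SimpleGraph in
/-- Doubling: if the `(s,t)` Graham inequality for target vertices holds for all
graphs, then so do the `(2s,t)` and `(s,2t)` inequalities. -/
theorem doubling (s t : ℕ) (hs : 0 < s) (ht : 0 < t)
    (h : ∀ (V W : Type) [Fintype V] [DecidableEq V] [Fintype W] [DecidableEq W]
        (G : SimpleGraph V) (H : SimpleGraph W) (x : V) (y : W),
        peb (G □ H) (unitDist (s * t) (x, y))
          ≤ peb G (unitDist s x) * peb H (unitDist t y)) :
    ∀ (V W : Type) [Fintype V] [DecidableEq V] [Fintype W] [DecidableEq W]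
        (G : SimpleGraph V) (H : SimpleGraph W) (x : V) (y : W),
        peb (G □ H) (unitDist (2 * (s * t)) (x, y))
            ≤ peb G (unitDist (2 * s) x) * peb H (unitDist t y) ∧
        peb (G □ H) (unitDist (2 * (s * t)) (x, y))
            ≤ peb G (unitDist s x) * peb H (unitDist (2 * t) y) := by
  intro V W _ _ _ _ G H x y
  constructor
  · calc peb (G □ H) (unitDist (2 * (s * t)) (x, y))
        ≤ peb ((pendant G x) □ H) (unitDist (s * t) (none, y)) := lemA G H x y (s * t)
      _ ≤ peb (pendant G x) (unitDist s none) * peb H (unitDist t y) :=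
        h (Option V) W (pendant G x) H none y
      _ ≤ peb G (unitDist (2 * s) x) * peb H (unitDist t y) :=
        mul_le_mul' (lemB G x s) le_rfl
  · have e1 : (G □ H) ≃g (H □ G) := boxProdComm G H
    have step1 : peb (G □ H) (unitDist (2 * (s * t)) (x, y))
        ≤ peb (H □ G) (unitDist (2 * (s * t)) (y, x)) := by
      have := peb_iso_le (boxProdComm H G).toEquiv
        (fun a b => (boxProdComm H G).map_rel_iff.symm) (unitDist (2 * (s * t)) (y, x))
      rwa [unitDist_iso (boxProdComm H G).toEquiv (2 * (s * t)) (y, x)] at this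
    have step2 : peb (H □ G) (unitDist (2 * (s * t)) (y, x))
        ≤ peb ((pendant H y) □ G) (unitDist (s * t) (none, x)) := lemA H G y x (s * t)
    have step3 : peb ((pendant H y) □ G) (unitDist (s * t) (none, x))
        ≤ peb (G □ (pendant H y)) (unitDist (s * t) (x, none)) := by
      have := peb_iso_le (boxProdComm G (pendant H y)).toEquiv
        (fun a b => (boxProdComm G (pendant H y)).map_rel_iff.symm) (unitDist (s * t) (x, none))
      rwa [unitDist_iso (boxProdComm G (pendant H y)).toEquiv (s * t) (x, none)] at this
    calc peb (G □ H) (unitDist (2 * (s * t)) (x, y))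
        ≤ peb (G □ (pendant H y)) (unitDist (s * t) (x, none)) :=
          le_trans step1 (le_trans step2 step3)
      _ ≤ peb G (unitDist s x) * peb (pendant H y) (unitDist t none) :=
          h V (Option W) G (pendant H y) x none
      _ ≤ peb G (unitDist s x) * peb H (unitDist (2 * t) y) :=
          mul_le_mul' le_rfl (lemB H y t)
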